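/- For n ≥ 1 and d ≥ 2, the generalized nil-Coxeter algebra NC_A(n,d) of type A_n with d = (d, 2, …, 2) — generated by x_1,…,x_n with x_1^d = 0, x_i^2 = 0 for i ≥ 2, x_i x_j = x_j x_i for |i-j| > 1, and x_i x_{i+1} x_i = x_{i+1} x_i x_{i+1} for all i — is a free k-module of rank n!·(1 + n(d-1)). -/

import Mathlib

/-- The defining relations of the generalized nil-Coxeter algebra `NC_A(n, d)` of type `A_n`
with exponent vector `(d, 2, …, 2)`: `x₁^d = 0`, `x_i² = 0` for `i ≥ 2`,
`x_i x_j = x_j x_i` for `|i - j| > 1`, and `x_i x_{i+1} x_i = x_{i+1} x_i x_{i+1}`. -/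
inductive NCARel (k : Type*) [CommRing k] (n d : ℕ) :
    FreeAlgebra k (Fin n) → FreeAlgebra k (Fin n) → Prop
  | pow_first (i : Fin n) (h : i.val = 0) : NCARel k n d (FreeAlgebra.ι k i ^ d) 0
  | sq (i : Fin n) (h : 0 < i.val) : NCARel k n d (FreeAlgebra.ι k i ^ 2) 0
  | comm (i j : Fin n) (h : i.val + 1 < j.val) :
      NCARel k n d (FreeAlgebra.ι k i * FreeAlgebra.ι k j)
        (FreeAlgebra.ι k j * FreeAlgebra.ι k i)
  | braid (i j : Fin n) (h : j.val = i.val + 1) :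
      NCARel k n d (FreeAlgebra.ι k i * FreeAlgebra.ι k j * FreeAlgebra.ι k i)
        (FreeAlgebra.ι k j * FreeAlgebra.ι k i * FreeAlgebra.ι k j)

namespace NCAux

variable (k : Type*) [CommRing k]

abbrev A (n d : ℕ) := RingQuot (NCARel k n d)

noncomputable def X {n d : ℕ} (i : Fin n) : A k n d :=
  RingQuot.mkAlgHom k (NCARel k n d) (FreeAlgebra.ι k i)

variable {k}

theorem X_pow_first {n d : ℕ} (i : Fin n) (h : i.val = 0) : X k i ^ d = (0 : A k n d) := by
  have := RingQuot.mkAlgHom_rel k (NCARel.pow_first (k := k) (n := n) (d := d) i h)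
  simpa [X, map_pow] using this

theorem X_sq {n d : ℕ} (i : Fin n) (h : 0 < i.val) : X k i ^ 2 = (0 : A k n d) := by
  have := RingQuot.mkAlgHom_rel k (NCARel.sq (k := k) (n := n) (d := d) i h)
  simpa [X, map_pow] using this

theorem X_comm {n d : ℕ} (i j : Fin n) (h : i.val + 1 < j.val) :
    X k i * X k j = (X k j * X k i : A k n d) := by
  have := RingQuot.mkAlgHom_rel k (NCARel.comm (k := k) (n := n) (d := d) i j h)
  simpa [X, map_mul] using this

theorem X_braid {n d : ℕ} (i j : Fin n) (h : j.val = i.val + 1) :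
    X k i * X k j * X k i = (X k j * X k i * X k j : A k n d) := by
  have := RingQuot.mkAlgHom_rel k (NCARel.braid (k := k) (n := n) (d := d) i j h)
  simpa [X, map_mul] using this

/-- iterate a partial map -/
def μpow {T : Type} (f : T → Option T) : ℕ → T → Option T
  | 0, t => some t
  | m + 1, t => (μpow f m t).bind f

/-- evaluate a word (rightmost letter acts first) -/
def evalμ {n : ℕ} {T : Type} (μ : Fin n → T → Option T) : List (Fin n) → T → Option T
  | [], t => some t
  | i :: l, t => (evalμ μ l t).bind (μ i)

variable (k)

/-- the word `[m, m-1, …, 1]` -/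
def climbL {N : ℕ} : (m : ℕ) → m < N + 1 → List (Fin (N+1))
  | 0, _ => []
  | m+1, h => ⟨m+1, h⟩ :: climbL m (by omega)

structure Model (n d : ℕ) where
  T : Type
  ft : Fintype T
  card : @Fintype.card T ft = n.factorial * (1 + n * (d - 1))
  t0 : T
  μ : Fin n → T → Option T
  w : T → A k n d
  hpow : ∀ i : Fin n, i.val = 0 → ∀ t, μpow (μ i) d t = none
  hsq : ∀ i : Fin n, 0 < i.val → ∀ t, (μ i t).bind (μ i) = none
  hcomm : ∀ i j : Fin n, i.val + 1 < j.val →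
      ∀ t, (μ j t).bind (μ i) = (μ i t).bind (μ j)
  hbraid : ∀ i j : Fin n, j.val = i.val + 1 →
      ∀ t, ((μ i t).bind (μ j)).bind (μ i) = ((μ j t).bind (μ i)).bind (μ j)
  step : ∀ (i : Fin n) (t : T), X k i * w t = (μ i t).elim 0 w
  w0 : w t0 = 1
  reach : ∀ t, ∃ l : List (Fin n), evalμ μ l t0 = some t ∧ w t = (l.map (X k)).prod

end NCAux

namespace NCAux

variable {k : Type*} [CommRing k] {n d : ℕ}

section Assembly

variable (M : Model k n d)

/-- the operator on the free module attached to a partial map -/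
noncomputable def opOf {T : Type} (ν : T → Option T) : (T →₀ k) →ₗ[k] (T →₀ k) :=
  Finsupp.lsum k fun t => (ν t).elim 0 (fun t' => Finsupp.lsingle t')

theorem opOf_single {T : Type} (ν : T → Option T) (t : T) (c : k) :
    opOf ν (Finsupp.single t c) = (ν t).elim 0 (fun t' => Finsupp.single t' c) := by
  rw [opOf, Finsupp.lsum_single]
  cases ν t <;> simp

theorem opOf_single_one {T : Type} (ν : T → Option T) (t : T) :
    opOf ν (Finsupp.single t (1:k)) = (ν t).elim 0 (fun t' => Finsupp.single t' (1:k)) :=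
  opOf_single ν t 1

theorem opOf_elim {T : Type} (ν : T → Option T) (o : Option T) :
    opOf ν (o.elim 0 (fun t' => Finsupp.single t' (1:k)))
      = (o.bind ν).elim 0 (fun t' => Finsupp.single t' (1:k)) := by
  cases o with
  | none => simp
  | some t => simp [opOf_single]

theorem opOf_bind {T : Type} (ν₁ ν₂ : T → Option T) (t : T) :
    opOf ν₂ (opOf ν₁ (Finsupp.single t (1:k)))
      = ((ν₁ t).bind ν₂).elim 0 (fun t' => Finsupp.single t' (1:k)) := by
  rw [opOf_single]
  cases ν₁ t with
  | none => simp
  | some t' => simp [opOf_single]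

/-- the representation on the free module, as a map from the free algebra -/
noncomputable def ρ₀ : FreeAlgebra k (Fin n) →ₐ[k] Module.End k (M.T →₀ k) :=
  FreeAlgebra.lift k fun i => opOf (M.μ i)

theorem ρ₀_iter_pow (i : Fin n) (m : ℕ) (t : M.T) :
    (opOf (M.μ i))^[m] (Finsupp.single t (1:k))
      = (μpow (M.μ i) m t).elim 0 (fun t' => Finsupp.single t' (1:k)) := by
  induction m with
  | zero => simp [μpow]
  | succ m ih =>
      rw [Function.iterate_succ_apply', ih, μpow]
      cases μpow (M.μ i) m t with
      | none => simp
      | some t' => simp [opOf_single]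

theorem ρ₀_rel {r s : FreeAlgebra k (Fin n)} (h : NCARel k n d r s) : ρ₀ M r = ρ₀ M s := by
  cases h with
  | pow_first i hi =>
      rw [map_pow, map_zero, ρ₀, FreeAlgebra.lift_ι_apply]
      apply Finsupp.lhom_ext
      intro t c
      have hc : Finsupp.single t c = c • Finsupp.single t (1:k) := by simp
      rw [hc, map_smul, map_smul]
      have : ((opOf (M.μ i) : Module.End k (M.T →₀ k)) ^ d) (Finsupp.single t (1:k)) = 0 := by
        rw [Module.End.pow_apply, ρ₀_iter_pow, M.hpow i hi t]
        rfl
      simp [this]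
  | sq i hi =>
      rw [map_pow, map_zero, ρ₀, FreeAlgebra.lift_ι_apply]
      apply Finsupp.lhom_ext
      intro t c
      have hc : Finsupp.single t c = c • Finsupp.single t (1:k) := by simp
      rw [hc, map_smul, map_smul]
      have : ((opOf (M.μ i) : Module.End k (M.T →₀ k)) ^ 2) (Finsupp.single t (1:k)) = 0 := by
        rw [Module.End.pow_apply, ρ₀_iter_pow]
        have h2 : μpow (M.μ i) 2 t = none := by
          have := M.hsq i hi t
          simp [μpow, this]
        rw [h2]; rfl
      simp [this]
  | comm i j hij =>
      rw [map_mul, map_mul, ρ₀, FreeAlgebra.lift_ι_apply, FreeAlgebra.lift_ι_apply]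
      apply Finsupp.lhom_ext
      intro t c
      have hc : Finsupp.single t c = c • Finsupp.single t (1:k) := by simp
      rw [hc, map_smul, map_smul]
      have : (opOf (M.μ i) * opOf (M.μ j) : Module.End k (M.T →₀ k)) (Finsupp.single t (1:k))
          = (opOf (M.μ j) * opOf (M.μ i) : Module.End k (M.T →₀ k)) (Finsupp.single t (1:k)) := by
        simp only [Module.End.mul_apply]
        rw [opOf_bind, opOf_bind, M.hcomm i j hij t]
      rw [this]
  | braid i j hij =>
      rw [map_mul, map_mul, map_mul, map_mul, ρ₀, FreeAlgebra.lift_ι_apply,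
        FreeAlgebra.lift_ι_apply]
      apply Finsupp.lhom_ext
      intro t c
      have hc : Finsupp.single t c = c • Finsupp.single t (1:k) := by simp
      rw [hc, map_smul, map_smul]
      have : (opOf (M.μ i) * opOf (M.μ j) * opOf (M.μ i) : Module.End k (M.T →₀ k))
            (Finsupp.single t (1:k))
          = (opOf (M.μ j) * opOf (M.μ i) * opOf (M.μ j) : Module.End k (M.T →₀ k))
            (Finsupp.single t (1:k)) := by
        simp only [Module.End.mul_apply]
        rw [opOf_single_one, opOf_elim, opOf_elim, opOf_single_one, opOf_elim, opOf_elim,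
          M.hbraid i j hij t]
      rw [this]

/-- the representation descends to the quotient -/
noncomputable def ρ : A k n d →ₐ[k] Module.End k (M.T →₀ k) :=
  RingQuot.liftAlgHom k ⟨ρ₀ M, fun _ _ h => ρ₀_rel M h⟩

theorem ρ_X (i : Fin n) : ρ M (X k i) = opOf (M.μ i) := by
  rw [ρ, X, RingQuot.liftAlgHom_mkAlgHom_apply, ρ₀, FreeAlgebra.lift_ι_apply]

/-- the comparison map from the free module to the algebra -/
noncomputable def σ : (M.T →₀ k) →ₗ[k] A k n d :=
  Finsupp.linearCombination k M.w

theorem σ_single (t : M.T) (c : k) : σ M (Finsupp.single t c) = c • M.w t :=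
  Finsupp.linearCombination_single k c t

theorem intertwine (r : A k n d) (m : M.T →₀ k) : σ M (ρ M r m) = r * σ M m := by
  obtain ⟨x, rfl⟩ := RingQuot.mkAlgHom_surjective k (NCARel k n d) r
  induction x using FreeAlgebra.induction generalizing m with
  | grade0 c =>
      rw [AlgHom.commutes, AlgHom.commutes, Module.algebraMap_end_apply, map_smul,
        Algebra.smul_def]
  | grade1 i =>
      rw [show (RingQuot.mkAlgHom k (NCARel k n d)) (FreeAlgebra.ι k i) = X k i from rfl, ρ_X]
      -- both sides linear in m; check on singles
      induction m using Finsupp.induction_linear with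
      | zero => simp
      | add f g hf hg => rw [map_add, map_add, map_add, hf, hg, mul_add]
      | single t c =>
          rw [opOf_single, σ_single]
          cases h : M.μ i t with
          | none =>
              have := M.step i t
              rw [h] at this
              simp only [Option.elim] at this ⊢
              rw [map_zero, mul_smul_comm, this, smul_zero]
          | some t' =>
              have := M.step i t
              rw [h] at this
              simp only [Option.elim] at this ⊢
              rw [σ_single, mul_smul_comm, this]
  | mul a b ha hb =>
      simp only [map_mul, Module.End.mul_apply]
      rw [ha, hb, mul_assoc]
  | add a b ha hb =>
      simp only [map_add, LinearMap.add_apply]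
      rw [ha, hb, add_mul]

/-- evaluation of words matches the representation applied to basis vectors -/
theorem ρ_word (l : List (Fin n)) (t : M.T) :
    ρ M ((l.map (X k)).prod) (Finsupp.single t (1:k))
      = (evalμ M.μ l t).elim 0 (fun t' => Finsupp.single t' (1:k)) := by
  induction l with
  | nil => simp [evalμ]
  | cons i l ih =>
      rw [List.map_cons, List.prod_cons, map_mul]
      show ρ M (X k i) (ρ M _ _) = _
      rw [ih, ρ_X, evalμ]
      cases evalμ M.μ l t with
      | none => simp
      | some t' =>
          simp only [Option.bind_some, Option.elim]
          rw [opOf_single]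
          cases M.μ i t' <;> simp

noncomputable def φ : A k n d →ₗ[k] (M.T →₀ k) :=
  { toFun := fun r => ρ M r (Finsupp.single M.t0 (1:k))
    map_add' := by intro a b; simp [map_add]
    map_smul' := by intro c a; simp [map_smul] }

theorem σ_φ (r : A k n d) : σ M (φ M r) = r := by
  show σ M (ρ M r _) = r
  rw [intertwine, σ_single, M.w0, one_smul, mul_one]

theorem φ_σ (m : M.T →₀ k) : φ M (σ M m) = m := by
  induction m using Finsupp.induction_linear with
  | zero => simp
  | add f g hf hg => rw [map_add, map_add, hf, hg]
  | single t c =>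
      rw [σ_single]
      have hone : φ M (M.w t) = Finsupp.single t (1:k) := by
        obtain ⟨l, hl, hw⟩ := M.reach t
        show ρ M (M.w t) _ = _
        rw [hw, ρ_word, hl]
        rfl
      rw [map_smul, hone]
      simp

noncomputable def modelEquiv : A k n d ≃ₗ[k] (M.T →₀ k) :=
  LinearEquiv.ofLinear (φ M) (σ M)
    (by apply Finsupp.lhom_ext; intro t c; exact φ_σ M (Finsupp.single t c))
    (by ext r; exact σ_φ M r)

theorem model_basis (M : Model k n d) : Nonempty (Module.Basis (Fin (n.factorial * (1 + n * (d - 1)))) k (A k n d)) := by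
  letI := M.ft
  have e : M.T ≃ Fin (n.factorial * (1 + n * (d - 1))) :=
    Fintype.equivFinOfCardEq M.card
  exact ⟨(Finsupp.basisSingleOne.map (modelEquiv M).symm).reindex e⟩

end Assembly

end NCAux

namespace NCAux

variable {k : Type*} [CommRing k]

theorem μpow_add {T : Type} (f : T → Option T) (a b : ℕ) (t : T) :
    μpow f (a + b) t = (μpow f a t).bind (fun t' => μpow f b t') := by
  induction b with
  | zero => simp [μpow]
  | succ b ih =>
      show μpow f ((a + b) + 1) t = _
      rw [μpow, ih]
      cases μpow f a t with
      | none => simp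
      | some t' => simp [μpow]

/-- the trivial model for `n = 0` -/
noncomputable def baseModel (d : ℕ) : Model k 0 d where
  T := PUnit
  ft := inferInstance
  card := by simp
  t0 := PUnit.unit
  μ := fun i => i.elim0
  w := fun _ => 1
  hpow := fun i => i.elim0
  hsq := fun i => i.elim0
  hcomm := fun i => i.elim0
  hbraid := fun i => i.elim0
  step := fun i => i.elim0
  w0 := rfl
  reach := fun t => ⟨[], rfl, by simp [evalμ]⟩

section Step

variable {n' d : ℕ}

/-- out-of-range-safe generators -/
noncomputable def Xn (m : ℕ) : A k (n' + 1) d :=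
  if h : m < n' + 1 then X k ⟨m, h⟩ else 0

theorem Xn_eq (m : ℕ) (h : m < n' + 1) : (Xn m : A k (n'+1) d) = X k ⟨m, h⟩ := dif_pos h

theorem Xn_zero {m : ℕ} (h : ¬ m < n' + 1) : (Xn m : A k (n'+1) d) = 0 := dif_neg h

theorem Xn_comm {m j : ℕ} (h : m + 2 ≤ j) :
    (Xn m : A k (n'+1) d) * Xn j = Xn j * Xn m := by
  by_cases hj : j < n' + 1
  · rw [Xn_eq m (by omega), Xn_eq j hj]
    exact X_comm _ _ (by simpa using by omega)
  · rw [Xn_zero hj, mul_zero, zero_mul]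

theorem Xn_braid {m : ℕ} (hm : m + 1 < n' + 1) :
    (Xn m : A k (n'+1) d) * Xn (m+1) * Xn m = Xn (m+1) * Xn m * Xn (m+1) := by
  rw [Xn_eq m (by omega), Xn_eq (m+1) hm]
  exact X_braid _ _ rfl

theorem Xn_sq {m : ℕ} (h1 : 1 ≤ m) (hm : m < n' + 1) :
    (Xn m : A k (n'+1) d) * Xn m = 0 := by
  rw [Xn_eq m hm, ← pow_two]
  exact X_sq _ (by show 0 < m; omega)

theorem Xn_pow : (Xn 0 : A k (n'+1) d) ^ d = 0 := by
  rw [Xn_eq 0 (by omega)]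
  exact X_pow_first _ rfl

/-- `run m = X_m ⋯ X_1` -/
noncomputable def run : ℕ → A k (n'+1) d
  | 0 => 1
  | m + 1 => Xn (m+1) * run m

/-- `rune m = X_m ⋯ X_2` -/
noncomputable def rune : ℕ → A k (n'+1) d
  | 0 => 1
  | 1 => 1
  | m + 2 => Xn (m+2) * rune (m+1)

theorem run_eq_rune : ∀ m : ℕ, 1 ≤ m → (run m : A k (n'+1) d) = rune m * Xn 1
  | 1, _ => by simp [run, rune]
  | m + 2, _ => by
      rw [run, rune, run_eq_rune (m+1) (by omega), mul_assoc]

theorem Xn_run_comm : ∀ (m : ℕ) {j : ℕ}, m + 2 ≤ j →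
    (Xn j : A k (n'+1) d) * run m = run m * Xn j
  | 0, _, _ => by simp [run]
  | m + 1, j, h => by
      rw [run, ← mul_assoc, ← Xn_comm (by omega), mul_assoc,
        Xn_run_comm m (by omega), mul_assoc]

theorem Xn_rune_comm0 : ∀ (m : ℕ), (Xn 0 : A k (n'+1) d) * rune m = rune m * Xn 0
  | 0 => by simp [rune]
  | 1 => by simp [rune]
  | m + 2 => by
      rw [rune, ← mul_assoc, Xn_comm (by omega), mul_assoc,
        Xn_rune_comm0 (m+1), mul_assoc]

theorem Xn_run_braid : ∀ (m : ℕ) {g : ℕ}, 1 ≤ g → g + 1 ≤ m → m ≤ n' →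
    (Xn g : A k (n'+1) d) * run m = run m * Xn (g+1)
  | 0, g, hg, hgm, hm => by omega
  | m + 1, g, hg, hgm, hm => by
      rcases Nat.lt_or_ge g m with hlt | hge
      · rw [run, ← mul_assoc, Xn_comm (m := g) (by omega), mul_assoc,
          Xn_run_braid m hg (by omega) (by omega), ← mul_assoc]
      · have hgm' : g = m := by omega
        subst hgm'
        obtain ⟨p, hp⟩ : ∃ p, g = p + 1 := ⟨g - 1, by omega⟩
        calc Xn g * run (g + 1) = Xn g * (Xn (g+1) * (Xn g * run p)) := by
              rw [run, hp, run, ← hp]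
          _ = (Xn g * Xn (g+1) * Xn g) * run p := by simp only [mul_assoc]
          _ = (Xn (g+1) * Xn g * Xn (g+1)) * run p := by rw [Xn_braid (by omega)]
          _ = Xn (g+1) * Xn g * (Xn (g+1) * run p) := by simp only [mul_assoc]
          _ = Xn (g+1) * Xn g * (run p * Xn (g+1)) := by rw [Xn_run_comm p (by omega)]
          _ = run (g+1) * Xn (g+1) := by
              rw [run, hp, run, ← hp]; simp only [mul_assoc]

theorem Xn_run0 (m : ℕ) (h1 : 1 ≤ m) (hm : m ≤ n') :
    (Xn 0 : A k (n'+1) d) * run m * Xn 0 = run m * Xn 0 * Xn 1 := by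
  have hb : (Xn 0 : A k (n'+1) d) * Xn 1 * Xn 0 = Xn 1 * Xn 0 * Xn 1 := by
    exact Xn_braid (m := 0) (by omega)
  calc (Xn 0 : A k (n'+1) d) * run m * Xn 0 = Xn 0 * (rune m * Xn 1) * Xn 0 := by
        rw [run_eq_rune m h1]
    _ = rune m * (Xn 0 * Xn 1 * Xn 0) := by
        rw [← mul_assoc, Xn_rune_comm0 m]
        simp only [mul_assoc]
    _ = rune m * (Xn 1 * Xn 0 * Xn 1) := by rw [hb]
    _ = run m * Xn 0 * Xn 1 := by rw [run_eq_rune m h1]; simp only [mul_assoc]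

theorem Xn_010 (hn : 1 ≤ n') (m : ℕ) (hm : 2 ≤ m) :
    (Xn 0 : A k (n'+1) d) * Xn 1 * Xn 0 ^ m = 0 := by
  have hb : (Xn 0 : A k (n'+1) d) * Xn 1 * Xn 0 = Xn 1 * Xn 0 * Xn 1 := by
    exact Xn_braid (m := 0) (by omega)
  have h4 : (Xn 0 : A k (n'+1) d) * Xn 1 * Xn 0 * Xn 0 = 0 := by
    rw [hb, mul_assoc, mul_assoc, ← mul_assoc (Xn 0), hb, ← mul_assoc, ← mul_assoc,
      Xn_sq le_rfl (by omega), zero_mul, zero_mul]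
  obtain ⟨a, rfl⟩ : ∃ a, m = a + 2 := ⟨m - 2, by omega⟩
  rw [show a + 2 = 2 + a by omega, pow_add, ← mul_assoc, pow_two, ← mul_assoc, h4, zero_mul]

theorem Xn_pow_comm {g : ℕ} (hg : 2 ≤ g) (a : ℕ) :
    (Xn g : A k (n'+1) d) * Xn 0 ^ a = Xn 0 ^ a * Xn g := by
  induction a with
  | zero => simp
  | succ a ih =>
      rw [pow_succ, ← mul_assoc, ih, mul_assoc, ← Xn_comm (by omega), ← mul_assoc]

/-- the inclusion of the rank `n'` nil-Coxeter algebra -/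
noncomputable def ψ : A k n' 2 →ₐ[k] A k (n'+1) d :=
  RingQuot.liftAlgHom k
    ⟨FreeAlgebra.lift k fun j : Fin n' => X k j.succ, by
      intro x y h
      cases h with
      | pow_first i hi =>
          simp only [map_pow, map_zero, FreeAlgebra.lift_ι_apply]
          exact X_sq i.succ (by simp)
      | sq i hi =>
          simp only [map_pow, map_zero, FreeAlgebra.lift_ι_apply]
          exact X_sq i.succ (by simp)
      | comm i j hij =>
          simp only [map_mul, FreeAlgebra.lift_ι_apply]
          exact X_comm i.succ j.succ (by simpa using by omega)
      | braid i j hij =>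
          simp only [map_mul, FreeAlgebra.lift_ι_apply]
          exact X_braid i.succ j.succ (by simpa using by omega)⟩

theorem ψ_X (j : Fin n') : (ψ (X k j) : A k (n'+1) d) = X k j.succ := by
  rw [ψ, X, RingQuot.liftAlgHom_mkAlgHom_apply, FreeAlgebra.lift_ι_apply]

theorem ψ_step (M' : Model k n' 2) (j : Fin n') (v : M'.T) :
    (X k j.succ : A k (n'+1) d) * ψ (M'.w v)
      = (M'.μ j v).elim 0 (fun v' => ψ (M'.w v')) := by
  rw [← ψ_X, ← map_mul, M'.step j v]
  cases M'.μ j v with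
  | none => simp
  | some v' => simp

section Mu

variable (M' : Model k n' 2) (hd : 2 ≤ d)

/-- prefix states -/
abbrev P (n' d : ℕ) := Option (Fin (n'+1) × Fin (d-1))

/-- the transition map -/
def μF (g : Fin (n'+1)) : P n' d × M'.T → Option (P n' d × M'.T) :=
  fun x =>
    match x with
    | (none, v) =>
      if hg : g.val = 0 then some (some (⟨0, Nat.succ_pos _⟩, ⟨0, by omega⟩), v)
      else (M'.μ ⟨g.val - 1, by have := g.isLt; omega⟩ v).map (fun v' => (none, v'))
    | (some (κ, α), v) =>
      if hg : g.val = 0 then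
        if hκ : κ.val = 0 then
          if hα : α.val + 1 < d - 1 then some (some (κ, ⟨α.val + 1, hα⟩), v) else none
        else
          if hα : α.val = 0 then
            (M'.μ ⟨0, by have := κ.isLt; omega⟩ v).map (fun v' => (some (κ, α), v'))
          else none
      else
        if hk : g.val = κ.val then none
        else if hk1 : g.val = κ.val + 1 then some (some (g, α), v)
        else if hk2 : κ.val + 2 ≤ g.val then
          (M'.μ ⟨g.val - 1, by have := g.isLt; omega⟩ v).map (fun v' => (some (κ, α), v'))
        else
          (M'.μ ⟨g.val, by have := κ.isLt; omega⟩ v).map (fun v' => (some (κ, α), v'))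

variable {M'}

theorem μF_none_zero {g : Fin (n'+1)} (hg : g.val = 0) (v : M'.T) :
    μF M' hd g (none, v) = some (some (⟨0, Nat.succ_pos _⟩, ⟨0, by omega⟩), v) := by
  simp [μF, hg]

theorem μF_none_pos {g : Fin (n'+1)} (hg : g.val ≠ 0) (v : M'.T) :
    μF M' hd g (none, v)
      = (M'.μ ⟨g.val - 1, by have := g.isLt; omega⟩ v).map (fun v' => (none, v')) := by
  simp [μF, hg]

theorem μF_zero_zero {g : Fin (n'+1)} (hg : g.val = 0) {κ : Fin (n'+1)} (hκ : κ.val = 0)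
    (α : Fin (d-1)) (v : M'.T) :
    μF M' hd g (some (κ, α), v)
      = if hα : α.val + 1 < d - 1 then some (some (κ, ⟨α.val + 1, hα⟩), v) else none := by
  simp [μF, hg, hκ]

theorem μF_zero_pos {g : Fin (n'+1)} (hg : g.val = 0) {κ : Fin (n'+1)} (hκ : κ.val ≠ 0)
    (α : Fin (d-1)) (v : M'.T) :
    μF M' hd g (some (κ, α), v)
      = if α.val = 0 then
          (M'.μ ⟨0, by have := κ.isLt; omega⟩ v).map (fun v' => (some (κ, α), v'))
        else none := by
  by_cases hα : α.val = 0 <;> simp [μF, hg, hκ, hα]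

theorem μF_eq {g κ : Fin (n'+1)} (hk : g.val = κ.val) (hg : g.val ≠ 0) (α : Fin (d-1))
    (v : M'.T) : μF M' hd g (some (κ, α), v) = none := by
  simp only [μF]
  rw [dif_neg hg, dif_pos hk]

theorem μF_succ {g κ : Fin (n'+1)} (hk : g.val = κ.val + 1) (α : Fin (d-1)) (v : M'.T) :
    μF M' hd g (some (κ, α), v) = some (some (g, α), v) := by
  have hg : g.val ≠ 0 := by omega
  have hk' : g.val ≠ κ.val := by omega
  simp [μF, hg, hk, hk']

theorem μF_big {g κ : Fin (n'+1)} (hk : κ.val + 2 ≤ g.val) (α : Fin (d-1)) (v : M'.T) :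
    μF M' hd g (some (κ, α), v)
      = (M'.μ ⟨g.val - 1, by have := g.isLt; omega⟩ v).map (fun v' => (some (κ, α), v')) := by
  have hg : g.val ≠ 0 := by omega
  have hk' : g.val ≠ κ.val := by omega
  have hk1 : g.val ≠ κ.val + 1 := by omega
  simp [μF, hg, hk, hk', hk1]

theorem μF_small {g κ : Fin (n'+1)} (hg : g.val ≠ 0) (hk : g.val < κ.val) (α : Fin (d-1))
    (v : M'.T) :
    μF M' hd g (some (κ, α), v)
      = (M'.μ ⟨g.val, by have := κ.isLt; omega⟩ v).map (fun v' => (some (κ, α), v')) := by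
  have hk' : g.val ≠ κ.val := by omega
  have hk1 : g.val ≠ κ.val + 1 := by omega
  have hk2 : ¬ κ.val + 2 ≤ g.val := by omega
  simp [μF, hg, hk', hk1, hk2]

end Mu

section MuRel

variable {M' : Model k n' 2} (hd : 2 ≤ d)

theorem Msq (j : Fin n') (v : M'.T) : (M'.μ j v).bind (M'.μ j) = none := by
  by_cases hj : j.val = 0
  · simpa [μpow] using M'.hpow j hj v
  · exact M'.hsq j (by omega) v

theorem bind_map_aux {β γ : Type} (o : Option β) (F : γ → Option γ) (f2 : β → Option β)
    (q : β → γ) (h : ∀ v, F (q v) = (f2 v).map q) :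
    (o.map q).bind F = (o.bind f2).map q := by
  cases o with
  | none => simp
  | some v => simp [h v]

theorem bind_map_none {β γ : Type} (o : Option β) (F : γ → Option γ)
    (q : β → γ) (h : ∀ v, F (q v) = none) :
    (o.map q).bind F = none := by
  cases o with
  | none => simp
  | some v => simp [h v]

/-- square relation for `μF` -/
theorem hsqF (g : Fin (n'+1)) (hg : 0 < g.val) (t : P n' d × M'.T) :
    (μF M' hd g t).bind (μF M' hd g) = none := by
  obtain ⟨p, v⟩ := t
  have hgne : g.val ≠ 0 := by omega
  rcases p with _ | ⟨κ, α⟩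
  · rw [μF_none_pos hd hgne,
      bind_map_aux _ _ _ _ (fun v1 => μF_none_pos hd hgne v1), Msq]
    rfl
  · by_cases h1 : g.val = κ.val
    · rw [μF_eq hd h1 hgne]
      rfl
    by_cases h2 : g.val = κ.val + 1
    · rw [μF_succ hd h2, Option.bind_some, μF_eq hd rfl hgne]
    by_cases h3 : κ.val + 2 ≤ g.val
    · rw [μF_big hd h3, bind_map_aux _ _ _ _ (fun v1 => μF_big hd h3 α v1), Msq]
      rfl
    · have h4 : g.val < κ.val := by omega
      rw [μF_small hd hgne h4,
        bind_map_aux _ _ _ _ (fun v1 => μF_small hd hgne h4 α v1), Msq]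
      rfl


theorem climb0 (κ0 : Fin (n'+1)) (hκ0 : κ0.val = 0) :
    ∀ (m : ℕ) (α : Fin (d-1)) (v : M'.T),
    μpow (μF M' hd ⟨0, Nat.succ_pos _⟩) m (some (κ0, α), v)
      = if h : α.val + m ≤ d - 2 then some (some (κ0, ⟨α.val + m, by omega⟩), v) else none
  | 0, α, v => by
      rw [dif_pos (by have := α.isLt; omega)]
      simp [μpow, Fin.ext_iff]
  | m + 1, α, v => by
      show (μpow (μF M' hd ⟨0, Nat.succ_pos _⟩) m (some (κ0, α), v)).bind _ = _
      rw [climb0 κ0 hκ0 m α v]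
      by_cases hp : α.val + m ≤ d - 2
      · rw [dif_pos hp, Option.bind_some, μF_zero_zero hd rfl hκ0]
        by_cases h : α.val + (m + 1) ≤ d - 2
        · rw [dif_pos (by simp; omega), dif_pos h]
          simp [Fin.ext_iff]
          omega
        · rw [dif_neg (by simp; omega), dif_neg h]
      · rw [dif_neg hp, Option.bind_none, dif_neg (by omega)]

theorem hpowF (g : Fin (n'+1)) (hg : g.val = 0) (t : P n' d × M'.T) :
    μpow (μF M' hd g) d t = none := by
  have hgeq : g = ⟨0, Nat.succ_pos _⟩ := Fin.ext hg
  subst hgeq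
  obtain ⟨p, v⟩ := t
  rcases p with _ | ⟨κ, α⟩
  · have key := μpow_add (μF M' hd ⟨0, Nat.succ_pos _⟩) 1 (d-1) ((none : P n' d), v)
    rw [show 1 + (d-1) = d by omega] at key
    rw [key]
    have e1 : μpow (μF M' hd ⟨0, Nat.succ_pos _⟩) 1 ((none : P n' d), v)
        = μF M' hd ⟨0, Nat.succ_pos _⟩ ((none : P n' d), v) := by
      simp [μpow]
    rw [e1, μF_none_zero hd rfl, Option.bind_some, climb0 hd _ rfl, dif_neg (by omega)]
  · by_cases hκ : κ.val = 0
    · rw [climb0 hd _ hκ, dif_neg (by omega)]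
    · by_cases hα : α.val = 0
      · have key := μpow_add (μF M' hd ⟨0, Nat.succ_pos _⟩) 2 (d-2) ((some (κ, α) : P n' d), v)
        rw [show 2 + (d-2) = d by omega] at key
        rw [key]
        have h2 : μpow (μF M' hd ⟨0, Nat.succ_pos _⟩) 2 ((some (κ, α) : P n' d), v) = none := by
          show ((μpow (μF M' hd ⟨0, Nat.succ_pos _⟩) 1 _).bind _) = none
          have e1 : μpow (μF M' hd ⟨0, Nat.succ_pos _⟩) 1 ((some (κ, α) : P n' d), v)
              = μF M' hd ⟨0, Nat.succ_pos _⟩ ((some (κ, α) : P n' d), v) := by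
            simp [μpow]
          rw [e1, μF_zero_pos hd rfl hκ, if_pos hα, bind_map_aux _ _ _ _
            (fun v1 => by rw [μF_zero_pos hd rfl hκ, if_pos hα]), Msq]
          rfl
        rw [h2, Option.bind_none]
      · have key := μpow_add (μF M' hd ⟨0, Nat.succ_pos _⟩) 1 (d-1) ((some (κ, α) : P n' d), v)
        rw [show 1 + (d-1) = d by omega] at key
        rw [key]
        have e1 : μpow (μF M' hd ⟨0, Nat.succ_pos _⟩) 1 ((some (κ, α) : P n' d), v)
            = μF M' hd ⟨0, Nat.succ_pos _⟩ ((some (κ, α) : P n' d), v) := by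
          simp [μpow]
        rw [e1, μF_zero_pos hd rfl hκ, if_neg hα, Option.bind_none]


theorem map_bind_some {β γ : Type} (o : Option β) (F : γ → Option γ) (q1 q2 : β → γ)
    (h : ∀ v, F (q1 v) = some (q2 v)) : (o.map q1).bind F = o.map q2 := by
  cases o with
  | none => simp
  | some v => simp [h v]

/-- commutation relation for `μF` -/
theorem hcommF (g h : Fin (n'+1)) (hgh : g.val + 1 < h.val) (t : P n' d × M'.T) :
    (μF M' hd h t).bind (μF M' hd g) = (μF M' hd g t).bind (μF M' hd h) := by
  obtain ⟨p, v⟩ := t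
  have hh0 : h.val ≠ 0 := by omega
  rcases p with _ | ⟨κ, α⟩
  · by_cases hg0 : g.val = 0
    · rw [μF_none_pos hd hh0 v, μF_none_zero hd hg0 v, Option.bind_some,
        μF_big hd (show (0:ℕ) + 2 ≤ h.val by omega) _ v]
      cases hv : M'.μ ⟨h.val - 1, by have := h.isLt; omega⟩ v with
      | none => simp
      | some v1 => simp [μF_none_zero hd hg0]
    · rw [μF_none_pos hd hh0 v,
        bind_map_aux _ _ _ _ (fun v1 => μF_none_pos hd hg0 v1),
        μF_none_pos hd hg0 v,
        bind_map_aux _ _ _ _ (fun v1 => μF_none_pos hd hh0 v1),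
        M'.hcomm _ _ (show g.val - 1 + 1 < h.val - 1 by omega)]
  · by_cases hg0 : g.val = 0
    · by_cases hκ0 : κ.val = 0
      · have hbig : κ.val + 2 ≤ h.val := by omega
        rw [μF_big hd hbig α v, μF_zero_zero hd hg0 hκ0 α v]
        by_cases hα : α.val + 1 < d - 1
        · rw [dif_pos hα, Option.bind_some, μF_big hd hbig _ v,
            map_bind_some _ _ _ _
              (fun v1 => by rw [μF_zero_zero hd hg0 hκ0 α v1, dif_pos hα])]
        · rw [dif_neg hα, Option.bind_none,
            bind_map_none _ _ _
              (fun v1 => by rw [μF_zero_zero hd hg0 hκ0 α v1, dif_neg hα])]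
      · by_cases hhκ : h.val = κ.val
        · rw [μF_eq hd hhκ hh0 α v, Option.bind_none, μF_zero_pos hd hg0 hκ0 α v]
          by_cases hα : α.val = 0
          · rw [if_pos hα, bind_map_none _ _ _ (fun v1 => μF_eq hd hhκ hh0 α v1)]
          · rw [if_neg hα, Option.bind_none]
        · by_cases hhκ1 : h.val = κ.val + 1
          · rw [μF_succ hd hhκ1 α v, Option.bind_some, μF_zero_pos hd hg0 (by omega) α v,
              μF_zero_pos hd hg0 hκ0 α v]
            by_cases hα : α.val = 0
            · rw [if_pos hα, if_pos hα,
                map_bind_some _ _ _ _ (fun v1 => μF_succ hd hhκ1 α v1)]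
            · rw [if_neg hα, if_neg hα, Option.bind_none]
          · by_cases hbig : κ.val + 2 ≤ h.val
            · rw [μF_big hd hbig α v, μF_zero_pos hd hg0 hκ0 α v]
              by_cases hα : α.val = 0
              · rw [if_pos hα,
                  bind_map_aux _ _ _ _
                    (fun v1 => by rw [μF_zero_pos hd hg0 hκ0 α v1, if_pos hα]),
                  bind_map_aux _ _ _ _ (fun v1 => μF_big hd hbig α v1),
                  M'.hcomm _ _ (show (0:ℕ) + 1 < h.val - 1 by omega)]
              · rw [if_neg hα, Option.bind_none,
                  bind_map_none _ _ _
                    (fun v1 => by rw [μF_zero_pos hd hg0 hκ0 α v1, if_neg hα])]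
            · have hhκs : h.val < κ.val := by omega
              rw [μF_small hd hh0 hhκs α v, μF_zero_pos hd hg0 hκ0 α v]
              by_cases hα : α.val = 0
              · rw [if_pos hα,
                  bind_map_aux _ _ _ _
                    (fun v1 => by rw [μF_zero_pos hd hg0 hκ0 α v1, if_pos hα]),
                  bind_map_aux _ _ _ _ (fun v1 => μF_small hd hh0 hhκs α v1),
                  M'.hcomm _ _ (show (0:ℕ) + 1 < h.val by omega)]
              · rw [if_neg hα, Option.bind_none,
                  bind_map_none _ _ _
                    (fun v1 => by rw [μF_zero_pos hd hg0 hκ0 α v1, if_neg hα])]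
    · -- g ≥ 1
      by_cases hκg : g.val = κ.val
      · rw [μF_big hd (show κ.val + 2 ≤ h.val by omega) α v, μF_eq hd hκg hg0 α v,
          Option.bind_none, bind_map_none _ _ _ (fun v1 => μF_eq hd hκg hg0 α v1)]
      · by_cases hκg1 : g.val = κ.val + 1
        · rw [μF_big hd (show κ.val + 2 ≤ h.val by omega) α v, μF_succ hd hκg1 α v,
            Option.bind_some, μF_big hd (show g.val + 2 ≤ h.val by omega) α v,
            map_bind_some _ _ _ _ (fun v1 => μF_succ hd hκg1 α v1)]
        · by_cases hbigg : κ.val + 2 ≤ g.val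
          · rw [μF_big hd (show κ.val + 2 ≤ h.val by omega) α v, μF_big hd hbigg α v,
              bind_map_aux _ _ _ _ (fun v1 => μF_big hd hbigg α v1),
              bind_map_aux _ _ _ _
                (fun v1 => μF_big hd (show κ.val + 2 ≤ h.val by omega) α v1),
              M'.hcomm _ _ (show g.val - 1 + 1 < h.val - 1 by omega)]
          · have hgκ : g.val < κ.val := by omega
            by_cases hhκ : h.val = κ.val
            · rw [μF_eq hd hhκ hh0 α v, Option.bind_none, μF_small hd hg0 hgκ α v,
                bind_map_none _ _ _ (fun v1 => μF_eq hd hhκ hh0 α v1)]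
            · by_cases hhκ1 : h.val = κ.val + 1
              · rw [μF_succ hd hhκ1 α v, Option.bind_some,
                  μF_small hd hg0 (show g.val < h.val by omega) α v,
                  μF_small hd hg0 hgκ α v,
                  map_bind_some _ _ _ _ (fun v1 => μF_succ hd hhκ1 α v1)]
              · by_cases hbigh : κ.val + 2 ≤ h.val
                · rw [μF_big hd hbigh α v, μF_small hd hg0 hgκ α v,
                    bind_map_aux _ _ _ _ (fun v1 => μF_small hd hg0 hgκ α v1),
                    bind_map_aux _ _ _ _ (fun v1 => μF_big hd hbigh α v1),
                    M'.hcomm _ _ (show g.val + 1 < h.val - 1 by omega)]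
                · have hhκs : h.val < κ.val := by omega
                  rw [μF_small hd hh0 hhκs α v, μF_small hd hg0 hgκ α v,
                    bind_map_aux _ _ _ _ (fun v1 => μF_small hd hg0 hgκ α v1),
                    bind_map_aux _ _ _ _ (fun v1 => μF_small hd hh0 hhκs α v1),
                    M'.hcomm _ _ (show g.val + 1 < h.val by omega)]


/-- braid relation for `μF` -/
theorem hbraidF (g h : Fin (n'+1)) (hgh : h.val = g.val + 1) (t : P n' d × M'.T) :
    ((μF M' hd g t).bind (μF M' hd h)).bind (μF M' hd g)
      = ((μF M' hd h t).bind (μF M' hd g)).bind (μF M' hd h) := by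
  obtain ⟨hv, hlt⟩ := h
  have hgh' : hv = g.val + 1 := hgh
  subst hgh'
  set h : Fin (n'+1) := ⟨g.val + 1, hlt⟩ with hh
  have hh0 : h.val ≠ 0 := by simp [hh]
  obtain ⟨p, v⟩ := t
  rcases p with _ | ⟨κ, α⟩
  · by_cases hg0 : g.val = 0
    · rw [μF_none_zero hd hg0 v, Option.bind_some,
        μF_succ hd (show g.val + 1 = (0:ℕ) + 1 by omega) _ v, Option.bind_some,
        μF_zero_pos hd hg0 hh0 _ v, if_pos rfl,
        μF_none_pos hd hh0 v,
        map_bind_some _ _ _ _ (fun v1 => μF_none_zero hd hg0 v1),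
        map_bind_some _ _ _ _
          (fun v1 => μF_succ hd (show g.val + 1 = (0:ℕ) + 1 by omega) _ v1)]
      have hg0' : g = ⟨0, Nat.succ_pos _⟩ := Fin.ext hg0
      subst hg0'
      rfl
    · rw [μF_none_pos hd hg0 v,
        bind_map_aux _ _ _ _ (fun v1 => μF_none_pos hd hh0 v1),
        bind_map_aux _ _ _ _ (fun v1 => μF_none_pos hd hg0 v1),
        μF_none_pos hd hh0 v,
        bind_map_aux _ _ _ _ (fun v1 => μF_none_pos hd hg0 v1),
        bind_map_aux _ _ _ _ (fun v1 => μF_none_pos hd hh0 v1),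
        M'.hbraid _ _ (show g.val + 1 - 1 = (g.val - 1) + 1 by omega)]
  · by_cases hg0 : g.val = 0
    · by_cases hκ0 : κ.val = 0
      · -- LHS dies, RHS dies
        rw [μF_zero_zero hd hg0 hκ0 α v, μF_succ hd (show g.val+1 = κ.val+1 by omega) α v,
          Option.bind_some, μF_zero_pos hd hg0 hh0 α v]
        by_cases hα : α.val + 1 < d - 1
        · rw [dif_pos hα, Option.bind_some,
            μF_succ hd (show g.val+1 = κ.val+1 by omega) _ v, Option.bind_some,
            μF_zero_pos hd hg0 hh0 _ v, if_neg (by simp)]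
          by_cases hα0 : α.val = 0
          · rw [if_pos hα0,
              bind_map_none _ _ _ (fun v1 => μF_eq hd rfl hh0 α v1)]
          · rw [if_neg hα0, Option.bind_none]
        · rw [dif_neg hα, Option.bind_none, Option.bind_none]
          by_cases hα0 : α.val = 0
          · rw [if_pos hα0,
              bind_map_none _ _ _ (fun v1 => μF_eq hd rfl hh0 α v1)]
          · rw [if_neg hα0, Option.bind_none]
      · by_cases hκ1 : κ.val = 1
        · -- h.val = 1 = κ : both none
          rw [μF_zero_pos hd hg0 hκ0 α v,
            μF_eq hd (show g.val + 1 = κ.val by omega) hh0 α v, Option.bind_none,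
            Option.bind_none]
          by_cases hα0 : α.val = 0
          · rw [if_pos hα0,
              bind_map_none _ _ _
                (fun v1 => μF_eq hd (show g.val + 1 = κ.val by omega) hh0 α v1),
              Option.bind_none]
          · rw [if_neg hα0, Option.bind_none, Option.bind_none]
        · -- κ ≥ 2 : braid of f_0 f_1
          have hκ2 : 2 ≤ κ.val := by omega
          rw [μF_zero_pos hd hg0 hκ0 α v,
            μF_small hd hh0 (show g.val + 1 < κ.val by omega) α v]
          by_cases hα0 : α.val = 0
          · rw [if_pos hα0,
              bind_map_aux _ _ _ _
                (fun v1 => μF_small hd hh0 (show g.val + 1 < κ.val by omega) α v1),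
              bind_map_aux _ _ _ _
                (fun v1 => by rw [μF_zero_pos hd hg0 hκ0 α v1, if_pos hα0]),
              bind_map_aux _ _ _ _
                (fun v1 => by rw [μF_zero_pos hd hg0 hκ0 α v1, if_pos hα0]),
              bind_map_aux _ _ _ _
                (fun v1 => μF_small hd hh0 (show g.val + 1 < κ.val by omega) α v1),
              M'.hbraid _ _ (show g.val + 1 = (0:ℕ) + 1 by omega)]
          · rw [if_neg hα0, Option.bind_none, Option.bind_none,
              bind_map_none _ _ _
                (fun v1 => by rw [μF_zero_pos hd hg0 hκ0 α v1, if_neg hα0]),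
              Option.bind_none]
    · -- g ≥ 1
      by_cases hκg : g.val = κ.val
      · rw [μF_eq hd hκg hg0 α v, Option.bind_none, Option.bind_none,
          μF_succ hd (show g.val + 1 = κ.val + 1 by omega) α v, Option.bind_some,
          μF_small hd hg0 (show g.val < g.val + 1 by omega) α v,
          bind_map_none _ _ _ (fun v1 => μF_eq hd rfl hh0 α v1)]
      · by_cases hκg1 : g.val = κ.val + 1
        · rw [μF_succ hd hκg1 α v, Option.bind_some,
            μF_succ hd (show g.val + 1 = g.val + 1 from rfl) α v, Option.bind_some,
            μF_small hd hg0 (show g.val < g.val + 1 by omega) α v,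
            μF_big hd (show κ.val + 2 ≤ g.val + 1 by omega) α v,
            map_bind_some _ _ _ _ (fun v1 => μF_succ hd hκg1 α v1),
            map_bind_some _ _ _ _
              (fun v1 => μF_succ hd (show g.val + 1 = g.val + 1 from rfl) α v1)]
          rfl
        · by_cases hbigg : κ.val + 2 ≤ g.val
          · rw [μF_big hd hbigg α v,
              bind_map_aux _ _ _ _
                (fun v1 => μF_big hd (show κ.val + 2 ≤ g.val + 1 by omega) α v1),
              bind_map_aux _ _ _ _ (fun v1 => μF_big hd hbigg α v1),
              μF_big hd (show κ.val + 2 ≤ g.val + 1 by omega) α v,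
              bind_map_aux _ _ _ _ (fun v1 => μF_big hd hbigg α v1),
              bind_map_aux _ _ _ _
                (fun v1 => μF_big hd (show κ.val + 2 ≤ g.val + 1 by omega) α v1),
              M'.hbraid _ _ (show g.val + 1 - 1 = (g.val - 1) + 1 by omega)]
          · have hgκ : g.val < κ.val := by omega
            by_cases hhκ : g.val + 1 = κ.val
            · rw [μF_small hd hg0 hgκ α v,
                bind_map_none _ _ _ (fun v1 => μF_eq hd hhκ hh0 α v1),
                Option.bind_none, μF_eq hd hhκ hh0 α v, Option.bind_none,
                Option.bind_none]
            · have hhκs : g.val + 1 < κ.val := by omega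
              rw [μF_small hd hg0 hgκ α v,
                bind_map_aux _ _ _ _ (fun v1 => μF_small hd hh0 hhκs α v1),
                bind_map_aux _ _ _ _ (fun v1 => μF_small hd hg0 hgκ α v1),
                μF_small hd hh0 hhκs α v,
                bind_map_aux _ _ _ _ (fun v1 => μF_small hd hg0 hgκ α v1),
                bind_map_aux _ _ _ _ (fun v1 => μF_small hd hh0 hhκs α v1),
                M'.hbraid _ _ (show g.val + 1 = g.val + 1 from rfl)]

end MuRel

section StepAlg

variable {M' : Model k n' 2} (hd : 2 ≤ d)

/-- the basis elements of the step model -/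
noncomputable def wF (M' : Model k n' 2) : P n' d × M'.T → A k (n'+1) d
  | (none, v) => ψ (M'.w v)
  | (some (κ, α), v) => run κ.val * Xn 0 ^ (α.val + 1) * ψ (M'.w v)

theorem elim_map {β γ : Type} {Ω : Type*} (o : Option β) (q : β → γ) (z : Ω) (f : γ → Ω) :
    (o.map q).elim z f = o.elim z (fun b => f (q b)) := by cases o <;> rfl

theorem ψ_step_idx (M' : Model k n' 2) (m : ℕ) (hm : m < n') (v : M'.T) :
    (Xn (m+1) : A k (n'+1) d) * ψ (M'.w v)
      = (M'.μ ⟨m, hm⟩ v).elim 0 (fun v' => ψ (M'.w v')) := by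
  have h1 : (Xn (m+1) : A k (n'+1) d) = X k (⟨m, hm⟩ : Fin n').succ :=
    Xn_eq (m+1) (by omega)
  rw [h1]
  exact ψ_step M' ⟨m, hm⟩ v

theorem ψ_step_pos (g : Fin (n'+1)) (hg : g.val ≠ 0) (v : M'.T) :
    (Xn g.val : A k (n'+1) d) * ψ (M'.w v)
      = (M'.μ ⟨g.val - 1, by have := g.isLt; omega⟩ v).elim 0 (fun v' => ψ (M'.w v')) := by
  obtain ⟨m, hm⟩ : ∃ m, g.val = m + 1 := ⟨g.val - 1, by omega⟩
  have hmn : m < n' := by have := g.isLt; omega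
  have key := ψ_step_idx (d := d) M' m hmn v
  rw [← hm] at key
  rw [key]
  have hfin : (⟨g.val - 1, by have := g.isLt; omega⟩ : Fin n') = ⟨m, hmn⟩ :=
    Fin.ext (by simp [hm])
  rw [hfin]

theorem mul_elim {β : Type} (o : Option β) (c : A k (n'+1) d) (f : β → A k (n'+1) d) :
    c * o.elim 0 f = o.elim 0 (fun b => c * f b) := by cases o <;> simp

/-- step identity for the step model -/
theorem stepF (g : Fin (n'+1)) (t : P n' d × M'.T) :
    X k g * wF M' t = (μF M' hd g t).elim 0 (wF M') := by
  obtain ⟨p, v⟩ := t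
  have hXg : (X k g : A k (n'+1) d) = Xn g.val := (Xn_eq g.val g.isLt).symm
  rcases p with _ | ⟨κ, α⟩
  · by_cases hg0 : g.val = 0
    · rw [μF_none_zero hd hg0 v, hXg, hg0]
      show (Xn 0 : A k (n'+1) d) * ψ (M'.w v)
          = run (0:ℕ) * Xn 0 ^ (0 + 1) * ψ (M'.w v)
      simp [run]
    · rw [μF_none_pos hd hg0 v, hXg, elim_map]
      show (Xn g.val : A k (n'+1) d) * ψ (M'.w v) = _
      rw [ψ_step_pos g hg0 v]
      cases M'.μ ⟨g.val - 1, by have := g.isLt; omega⟩ v <;> rfl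
  · by_cases hg0 : g.val = 0
    · have hge : g = ⟨0, Nat.succ_pos _⟩ := Fin.ext hg0
      subst hge
      by_cases hκ0 : κ.val = 0
      · rw [μF_zero_zero hd rfl hκ0 α v, hXg]
        have hκe : κ = ⟨0, Nat.succ_pos _⟩ := Fin.ext hκ0
        subst hκe
        by_cases hα : α.val + 1 < d - 1
        · rw [dif_pos hα]
          show (Xn 0 : A k (n'+1) d) * (run (0:ℕ) * Xn 0 ^ (α.val + 1) * ψ (M'.w v))
              = run (0:ℕ) * Xn 0 ^ (α.val + 1 + 1) * ψ (M'.w v)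
          simp only [run, one_mul]
          rw [← mul_assoc, ← pow_succ']
        · rw [dif_neg hα]
          show (Xn 0 : A k (n'+1) d) * (run (0:ℕ) * Xn 0 ^ (α.val + 1) * ψ (M'.w v)) = 0
          simp only [run, one_mul]
          rw [← mul_assoc, ← pow_succ',
            show α.val + 1 + 1 = d from (by have := α.isLt; omega), Xn_pow, zero_mul]
      · rw [μF_zero_pos hd rfl hκ0 α v, hXg]
        by_cases hα0 : α.val = 0
        · rw [if_pos hα0, elim_map]
          show (Xn 0 : A k (n'+1) d) * (run κ.val * Xn 0 ^ (α.val + 1) * ψ (M'.w v)) = _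
          simp only [hα0, pow_one, zero_add]
          calc (Xn 0 : A k (n'+1) d) * (run κ.val * Xn 0 * ψ (M'.w v))
              = (Xn 0 * run κ.val * Xn 0) * ψ (M'.w v) := by simp only [mul_assoc]
            _ = run κ.val * Xn 0 * (Xn 1 * ψ (M'.w v)) := by
                rw [Xn_run0 κ.val (by omega) (by have := κ.isLt; omega)]
                simp only [mul_assoc]
            _ = _ := by
                rw [ψ_step_idx (d := d) M' 0 (by have := κ.isLt; omega) v, mul_elim]
                cases M'.μ ⟨0, by have := κ.isLt; omega⟩ v with
                | none => rfl
                | some v1 =>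
                    show run κ.val * Xn 0 * ψ (M'.w v1)
                        = run κ.val * Xn 0 ^ (α.val + 1) * ψ (M'.w v1)
                    rw [hα0, pow_one]
        · rw [if_neg hα0]
          show (Xn 0 : A k (n'+1) d) * (run κ.val * Xn 0 ^ (α.val + 1) * ψ (M'.w v)) = 0
          have hbr : (Xn 1 : A k (n'+1) d) * Xn 0 * Xn 1 = Xn 0 * Xn 1 * Xn 0 :=
            (Xn_braid (m := 0) (by have := κ.isLt; omega)).symm
          calc (Xn 0 : A k (n'+1) d) * (run κ.val * Xn 0 ^ (α.val + 1) * ψ (M'.w v))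
              = (Xn 0 * run κ.val * Xn 0) * (Xn 0 ^ α.val * ψ (M'.w v)) := by
                rw [pow_succ']
                simp only [mul_assoc]
            _ = (run κ.val * Xn 0 * Xn 1) * (Xn 0 ^ α.val * ψ (M'.w v)) := by
                rw [Xn_run0 κ.val (by omega) (by have := κ.isLt; omega)]
            _ = rune κ.val * ((Xn 1 * Xn 0 * Xn 1) * (Xn 0 ^ α.val * ψ (M'.w v))) := by
                rw [run_eq_rune κ.val (by omega)]
                simp only [mul_assoc]
            _ = rune κ.val * ((Xn 0 * Xn 1 * Xn 0 ^ (α.val + 1)) * ψ (M'.w v)) := by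
                rw [hbr, pow_succ']
                simp only [mul_assoc]
            _ = 0 := by
                rw [Xn_010 (by have := κ.isLt; omega) (α.val + 1) (by omega), zero_mul,
                  mul_zero]
    · by_cases hκg : g.val = κ.val
      · rw [μF_eq hd hκg hg0 α v, hXg, hκg]
        show (Xn κ.val : A k (n'+1) d)
            * (run κ.val * Xn 0 ^ (α.val + 1) * ψ (M'.w v)) = 0
        obtain ⟨m, hm⟩ : ∃ m, κ.val = m + 1 := ⟨κ.val - 1, by omega⟩
        have hmlt : m + 1 < n' + 1 := by have := κ.isLt; omega
        rw [hm, run, ← mul_assoc, ← mul_assoc, ← mul_assoc, Xn_sq (by omega) hmlt]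
        simp
      · by_cases hκg1 : g.val = κ.val + 1
        · rw [μF_succ hd hκg1 α v, hXg, hκg1]
          show (Xn (κ.val+1) : A k (n'+1) d) * (run κ.val * Xn 0 ^ (α.val + 1) * ψ (M'.w v))
              = run g.val * Xn 0 ^ (α.val + 1) * ψ (M'.w v)
          rw [hκg1]
          show _ = Xn (κ.val+1) * run κ.val * Xn 0 ^ (α.val + 1) * ψ (M'.w v)
          simp only [mul_assoc]
        · by_cases hbig : κ.val + 2 ≤ g.val
          · rw [μF_big hd hbig α v, hXg, elim_map]
            calc (Xn g.val : A k (n'+1) d)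
                  * (run κ.val * Xn 0 ^ (α.val + 1) * ψ (M'.w v))
                = run κ.val * Xn 0 ^ (α.val + 1) * (Xn g.val * ψ (M'.w v)) := by
                  rw [← mul_assoc, ← mul_assoc, Xn_run_comm κ.val hbig,
                    mul_assoc (run κ.val), Xn_pow_comm (by omega)]
                  simp only [mul_assoc]
              _ = _ := by
                  rw [ψ_step_pos g hg0 v, mul_elim]
                  rfl
          · have hsm : g.val < κ.val := by omega
            rw [μF_small hd hg0 hsm α v, hXg, elim_map]
            calc (Xn g.val : A k (n'+1) d)
                  * (run κ.val * Xn 0 ^ (α.val + 1) * ψ (M'.w v))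
                = run κ.val * Xn 0 ^ (α.val + 1) * (Xn (g.val + 1) * ψ (M'.w v)) := by
                  rw [← mul_assoc, ← mul_assoc,
                    Xn_run_braid κ.val (by omega) (by omega) (by have := κ.isLt; omega),
                    mul_assoc (run κ.val), Xn_pow_comm (by omega)]
                  simp only [mul_assoc]
              _ = _ := by
                  rw [ψ_step_idx (d := d) M' g.val (by have := κ.isLt; omega) v, mul_elim]
                  rfl

end StepAlg

section Reach

variable {M' : Model k n' 2} (hd : 2 ≤ d)

theorem evalμ_append {n : ℕ} {T : Type} (μ : Fin n → T → Option T) (l1 l2 : List (Fin n))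
    (t : T) :
    evalμ μ (l1 ++ l2) t = (evalμ μ l2 t).bind (fun t' => evalμ μ l1 t') := by
  induction l1 with
  | nil => simp [evalμ]
  | cons i l ih =>
      show (evalμ μ (l ++ l2) t).bind (μ i) = _
      rw [ih]
      cases evalμ μ l2 t with
      | none => rfl
      | some t2 => rfl

theorem evalμ_shift (l : List (Fin n')) (v : M'.T) :
    evalμ (μF M' hd) (l.map Fin.succ) ((none : P n' d), v)
      = (evalμ M'.μ l v).map (fun v' => (none, v')) := by
  induction l with
  | nil => simp [evalμ]
  | cons i l ih =>
      show (evalμ (μF M' hd) (l.map Fin.succ) _).bind _ = _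
      rw [ih]
      show _ = ((evalμ M'.μ l v).bind (M'.μ i)).map _
      cases evalμ M'.μ l v with
      | none => rfl
      | some v1 =>
          show μF M' hd i.succ (none, v1) = _
          rw [μF_none_pos hd (by simp) v1]
          rfl

theorem climbL_eval (α : Fin (d-1)) (v : M'.T) :
    ∀ (m : ℕ) (h : m < n'+1),
      evalμ (μF M' hd) (climbL m h) ((some (⟨0, Nat.succ_pos _⟩, α) : P n' d), v)
        = some (some (⟨m, h⟩, α), v)
  | 0, h => by simp [climbL, evalμ]
  | m+1, h => by
      show (evalμ (μF M' hd) (climbL m (by omega)) _).bind _ = _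
      rw [climbL_eval α v m (by omega)]
      show μF M' hd ⟨m+1, h⟩ (some (⟨m, by omega⟩, α), v) = _
      rw [μF_succ hd rfl α v]

theorem replicate_eval (v : M'.T) :
    ∀ (m : ℕ) (hm : m < d - 1),
      evalμ (μF M' hd) (List.replicate (m+1) ⟨0, Nat.succ_pos _⟩) ((none : P n' d), v)
        = some (some (⟨0, Nat.succ_pos _⟩, ⟨m, hm⟩), v)
  | 0, h => by
      show (evalμ (μF M' hd) [] _).bind _ = _
      show (some _).bind _ = _
      rw [Option.bind_some, μF_none_zero hd rfl]
  | m+1, h => by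
      show (evalμ (μF M' hd) (List.replicate (m+1) _) _).bind _ = _
      rw [replicate_eval v m (by omega)]
      show μF M' hd ⟨0, Nat.succ_pos _⟩ (some (⟨0, Nat.succ_pos _⟩, ⟨m, by omega⟩), v) = _
      rw [μF_zero_zero hd rfl rfl, dif_pos h]

theorem climbL_prod : ∀ (m : ℕ) (h : m < n'+1),
    ((climbL m h).map (X k)).prod = (run m : A k (n'+1) d)
  | 0, h => by simp [climbL, run]
  | m+1, h => by
      show X k ⟨m+1, h⟩ * ((climbL m (by omega)).map (X k)).prod = _
      rw [climbL_prod m (by omega), run, Xn_eq (m+1) h]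

theorem shift_prod (l : List (Fin n')) :
    (((l.map Fin.succ).map (X k)).prod : A k (n'+1) d) = ψ ((l.map (X k)).prod) := by
  rw [map_list_prod, List.map_map, List.map_map]
  congr 1
  ext j
  simp [ψ_X]

end Reach

/-- the inductive step -/
noncomputable def stepModel (M' : Model k n' 2) (hd : 2 ≤ d) : Model k (n'+1) d where
  T := P n' d × M'.T
  ft := letI := M'.ft; inferInstance
  card := by
    letI := M'.ft
    have h := M'.card
    simp only [Fintype.card_prod, Fintype.card_option, Fintype.card_fin, h,
      Nat.factorial_succ]
    ring
  t0 := (none, M'.t0)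
  μ := μF M' hd
  w := wF M'
  hpow := fun i hi t => hpowF hd i hi t
  hsq := fun i hi t => hsqF hd i hi t
  hcomm := fun i j hij t => hcommF hd i j hij t
  hbraid := fun i j hij t => hbraidF hd i j hij t
  step := fun i t => stepF hd i t
  w0 := by
    show ψ (M'.w M'.t0) = 1
    rw [M'.w0, map_one]
  reach := by
    rintro ⟨p, v⟩
    obtain ⟨l, hl, hw⟩ := M'.reach v
    rcases p with _ | ⟨κ, α⟩
    · refine ⟨l.map Fin.succ, ?_, ?_⟩
      · rw [evalμ_shift hd l M'.t0, hl]
        rfl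
      · show ψ (M'.w v) = _
        rw [hw, ← shift_prod]
    · refine ⟨(climbL κ.val κ.isLt ++ List.replicate (α.val+1) ⟨0, Nat.succ_pos _⟩)
        ++ l.map Fin.succ, ?_, ?_⟩
      · rw [evalμ_append, evalμ_shift hd l M'.t0, hl, Option.map_some, Option.bind_some,
          evalμ_append,
          replicate_eval hd v α.val α.isLt, Option.bind_some,
          climbL_eval hd α v κ.val κ.isLt]
      · show run κ.val * Xn 0 ^ (α.val + 1) * ψ (M'.w v) = _
        rw [hw, ← shift_prod, List.map_append, List.prod_append, List.map_append,
          List.prod_append, climbL_prod κ.val κ.isLt, List.map_replicate,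
          List.prod_replicate, Xn_eq 0 (Nat.succ_pos _)]

end Step

end NCAux


namespace NCAux

variable {k : Type*} [CommRing k]

/-- the full tower of models -/
noncomputable def model : (n : ℕ) → (d : ℕ) → 2 ≤ d → Model k n d
  | 0, d, _ => baseModel d
  | (n+1), d, hd => stepModel (model n 2 le_rfl) hd

end NCAux

/-- For `n ≥ 1` and `d ≥ 2`, the generalized nil-Coxeter algebra `NC_A(n, d)` of type `A_n`
with exponents `(d, 2, …, 2)` is a free `k`-module of rank `n! · (1 + n(d-1))`. -/
theorem stmt_11 (k : Type*) [CommRing k] [Nontrivial k] (n d : ℕ) (hn : 1 ≤ n) (hd : 2 ≤ d) :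
    Nonempty (Module.Basis (Fin (n.factorial * (1 + n * (d - 1)))) k (RingQuot (NCARel k n d))) :=
  NCAux.model_basis (NCAux.model n d hd)
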